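/- arXiv:1903.04991 — 2 statements merged into one kernel-verified Lean document; each statement's English description precedes it below -/
import Mathlib

section
/- Let f(W₁,...,W_K; x) be a function of K weight matrices that is positively one-homogeneous separately in each W_k. Then the maximum margin problem max over (W₁,...,W_K) with ‖W_k‖ = 1 for all k, of min over n of y_n f(W₁,...,W_K; x_n), has value strictly positive if and only if the minimum norm problem min (1/2)Σ_k ‖W_k‖² subject to y_n f(W₁,...,W_K; x_n) ≥ 1 for all n is feasible; moreover the optimizers correspond under rescaling: (W₁*,...,W_K*) maximizes the margin with margin η > 0 if and only if (W₁*/η^{1/K}, ..., W_K*/η^{1/K}) is a minimum norm solution (in the case of equal layer norms). -/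
open Finset

/-- Scaling each layer by positive constants scales `f` by their product. -/
lemma mm_scale_all {d K : ℕ} {X : Type*}
    (f : (Fin K → EuclideanSpace ℝ (Fin d)) → X → ℝ)
    (hhom : ∀ (W : Fin K → EuclideanSpace ℝ (Fin d)) (k : Fin K) (α : ℝ),
      0 < α → ∀ x, f (Function.update W k (α • W k)) x = α * f W x)
    (W : Fin K → EuclideanSpace ℝ (Fin d)) (c : Fin K → ℝ) (hc : ∀ k, 0 < c k)
    (x : X) :
    f (fun k => c k • W k) x = (∏ k, c k) * f W x := by
  have key : ∀ s : Finset (Fin K),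
      f (fun k => if k ∈ s then c k • W k else W k) x = (∏ k ∈ s, c k) * f W x := by
    intro s
    induction s using Finset.induction_on with
    | empty => simp
    | @insert a s ha ih =>
      set V : Fin K → EuclideanSpace ℝ (Fin d) :=
        fun k => if k ∈ s then c k • W k else W k with hV
      have hupd : (fun k => if k ∈ insert a s then c k • W k else W k)
          = Function.update V a (c a • V a) := by
        funext k
        by_cases hk : k = a
        · subst hk
          simp [Function.update_self, hV, ha]
        · simp [Function.update_of_ne hk, hV, Finset.mem_insert, hk]
      rw [hupd, hhom V a (c a) (hc a) x, ih, Finset.prod_insert ha]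
      ring
  have h := key Finset.univ
  simpa using h

/-- Equivalence of the maximum margin problem under unit layer-norm constraints
and the minimum norm problem under margin constraints, for a function that is
positively one-homogeneous in each layer. -/
theorem max_margin_min_norm_equivalence {d K N : ℕ} [NeZero N] (hK : 0 < K)
    {X : Type*}
    (f : (Fin K → EuclideanSpace ℝ (Fin d)) → X → ℝ)
    (hhom : ∀ (W : Fin K → EuclideanSpace ℝ (Fin d)) (k : Fin K) (α : ℝ),
      0 < α → ∀ x, f (Function.update W k (α • W k)) x = α * f W x)
    (x : Fin N → X) (y : Fin N → ℝ) (hy : ∀ n, y n = 1 ∨ y n = -1) :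
    -- (a) positive max-margin value iff the min-norm problem is feasible
    ((∃ W : Fin K → EuclideanSpace ℝ (Fin d), (∀ k, ‖W k‖ = 1) ∧
        0 < ⨅ n, y n * f W (x n)) ↔
      (∃ W : Fin K → EuclideanSpace ℝ (Fin d), ∀ n, 1 ≤ y n * f W (x n))) ∧
    -- (b) correspondence of optimizers under rescaling
    (∀ (Wstar : Fin K → EuclideanSpace ℝ (Fin d)) (η : ℝ),
      (∀ k, ‖Wstar k‖ = 1) → η = ⨅ n, y n * f Wstar (x n) → 0 < η →
      ((∀ W : Fin K → EuclideanSpace ℝ (Fin d), (∀ k, ‖W k‖ = 1) →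
          (⨅ n, y n * f W (x n)) ≤ η) ↔
        ((∀ n, 1 ≤ y n * f (fun k => (η ^ ((1 : ℝ) / K))⁻¹ • Wstar k) (x n)) ∧
          ∀ W : Fin K → EuclideanSpace ℝ (Fin d),
            (∀ n, 1 ≤ y n * f W (x n)) →
            (1 / 2) * ∑ k, ‖(η ^ ((1 : ℝ) / K))⁻¹ • Wstar k‖ ^ 2 ≤
              (1 / 2) * ∑ k, ‖W k‖ ^ 2))) := by
  have hNe : Nonempty (Fin N) := ⟨⟨0, Nat.pos_of_ne_zero (NeZero.ne N)⟩⟩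
  have hKR : (0 : ℝ) < K := by exact_mod_cast hK
  have hKne : (K : ℝ) ≠ 0 := hKR.ne'
  -- uniform scaling
  have hscale : ∀ (W : Fin K → EuclideanSpace ℝ (Fin d)) (c : ℝ), 0 < c → ∀ x',
      f (fun k => c • W k) x' = c ^ K * f W x' := by
    intro W c hc x'
    have h := mm_scale_all f hhom W (fun _ => c) (fun _ => hc) x'
    simpa using h
  -- (x^{1/K})^K = x for x > 0
  have hrpow_inv : ∀ t : ℝ, 0 < t → (t ^ ((1 : ℝ) / K)) ^ K = t := by
    intro t ht
    rw [← Real.rpow_natCast (t ^ ((1 : ℝ) / K)) K, ← Real.rpow_mul ht.le, one_div,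
      inv_mul_cancel₀ hKne, Real.rpow_one]
  have hbdd : ∀ W : Fin K → EuclideanSpace ℝ (Fin d),
      BddBelow (Set.range fun n => y n * f W (x n)) :=
    fun W => (Set.finite_range _).bddBelow
  -- positive margin gives feasibility after rescaling
  have hpos_to_feas : ∀ (W : Fin K → EuclideanSpace ℝ (Fin d)) (η : ℝ), 0 < η →
      (∀ n, η ≤ y n * f W (x n)) →
      ∀ n, 1 ≤ y n * f (fun k => (η ^ ((1 : ℝ) / K))⁻¹ • W k) (x n) := by
    intro W η hη hmar n
    have hc : 0 < (η ^ ((1 : ℝ) / K))⁻¹ := inv_pos.2 (Real.rpow_pos_of_pos hη _)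
    rw [hscale W _ hc]
    have hpow : ((η ^ ((1 : ℝ) / K))⁻¹) ^ K = η⁻¹ := by
      rw [inv_pow, hrpow_inv η hη]
    rw [hpow]
    have h1 := hmar n
    have h2 : η⁻¹ * η ≤ η⁻¹ * (y n * f W (x n)) :=
      mul_le_mul_of_nonneg_left h1 (inv_nonneg.2 hη.le)
    rw [inv_mul_cancel₀ hη.ne'] at h2
    calc (1:ℝ) ≤ η⁻¹ * (y n * f W (x n)) := h2
      _ = y n * (η⁻¹ * f W (x n)) := by ring
  -- feasible implies all layers have positive norm
  have hfeas_norm : ∀ W : Fin K → EuclideanSpace ℝ (Fin d),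
      (∀ n, 1 ≤ y n * f W (x n)) → ∀ k, 0 < ‖W k‖ := by
    intro W hfe k
    obtain ⟨n0⟩ := hNe
    have hfne : f W (x n0) ≠ 0 := by
      intro h
      have h1 := hfe n0
      rw [h, mul_zero] at h1
      linarith
    rw [norm_pos_iff]
    intro h0
    have h2 := hhom W k 2 (by norm_num) (x n0)
    rw [h0, smul_zero, ← h0, Function.update_eq_self] at h2
    exact hfne (by linarith)
  -- normalization
  have hnormed : ∀ W : Fin K → EuclideanSpace ℝ (Fin d), (∀ k, 0 < ‖W k‖) → ∀ x',
      f (fun k => ‖W k‖⁻¹ • W k) x' = (∏ k, ‖W k‖)⁻¹ * f W x' := by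
    intro W hW x'
    rw [mm_scale_all f hhom W _ (fun k => inv_pos.2 (hW k)) x', ← Finset.prod_inv_distrib]
  have hunit : ∀ W : Fin K → EuclideanSpace ℝ (Fin d), (∀ k, 0 < ‖W k‖) →
      ∀ k, ‖(fun k => ‖W k‖⁻¹ • W k) k‖ = 1 := by
    intro W hW k
    simp only [norm_smul, Real.norm_eq_abs, abs_inv, abs_norm]
    exact inv_mul_cancel₀ (hW k).ne'
  -- sum of squared norms of a scaled unit-norm family
  have hsum_unit : ∀ (V : Fin K → EuclideanSpace ℝ (Fin d)) (a : ℝ), 0 < a →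
      (∀ k, ‖V k‖ = 1) → ∑ k, ‖a • V k‖ ^ 2 = K * a ^ 2 := by
    intro V a ha hV
    rw [Finset.sum_congr rfl (fun k _ => by
      rw [norm_smul, hV k, mul_one, Real.norm_eq_abs, abs_of_pos ha]),
      Finset.sum_const, Finset.card_univ, Fintype.card_fin, nsmul_eq_mul]
  refine ⟨⟨?_, ?_⟩, ?_⟩
  · -- (a) forward
    rintro ⟨W, hWn, hWm⟩
    exact ⟨fun k => ((⨅ n, y n * f W (x n)) ^ ((1 : ℝ) / K))⁻¹ • W k,
      hpos_to_feas W _ hWm (fun n => ciInf_le (hbdd W) n)⟩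
  · -- (a) backward
    rintro ⟨W, hWf⟩
    have hWk := hfeas_norm W hWf
    have hPpos : 0 < ∏ k, ‖W k‖ := Finset.prod_pos (fun k _ => hWk k)
    refine ⟨fun k => ‖W k‖⁻¹ • W k, hunit W hWk, ?_⟩
    refine lt_of_lt_of_le (inv_pos.2 hPpos) (le_ciInf fun n => ?_)
    rw [hnormed W hWk (x n)]
    have h1 := hWf n
    nlinarith [inv_pos.2 hPpos]
  · -- (b)
    intro Wstar η hWs hηdef hηpos
    have hmarstar : ∀ n, η ≤ y n * f Wstar (x n) := fun n =>
      hηdef ▸ ciInf_le (hbdd Wstar) n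
    have hcpos : 0 < (η ^ ((1 : ℝ) / K))⁻¹ := inv_pos.2 (Real.rpow_pos_of_pos hηpos _)
    constructor
    · intro hopt
      refine ⟨hpos_to_feas Wstar η hηpos hmarstar, ?_⟩
      intro W hWf
      have hWk := hfeas_norm W hWf
      set P := ∏ k, ‖W k‖ with hPdef
      have hPpos : 0 < P := Finset.prod_pos (fun k _ => hWk k)
      -- optimality applied to the normalized W
      have h1 : (⨅ n, y n * f (fun k => ‖W k‖⁻¹ • W k) (x n)) ≤ η :=
        hopt _ (hunit W hWk)
      have h2 : P⁻¹ ≤ ⨅ n, y n * f (fun k => ‖W k‖⁻¹ • W k) (x n) := by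
        refine le_ciInf fun n => ?_
        rw [hnormed W hWk (x n)]
        have h3 := hWf n
        nlinarith [inv_pos.2 hPpos]
      have hPinv : P⁻¹ ≤ η := h2.trans h1
      have hPge : η⁻¹ ≤ P := by
        nlinarith [mul_inv_cancel₀ hPpos.ne', mul_inv_cancel₀ hηpos.ne',
          inv_pos.2 hPpos, inv_pos.2 hηpos]
      -- AM-GM
      have hgm := Real.geom_mean_le_arith_mean_weighted Finset.univ
        (fun _ => 1 / (K : ℝ)) (fun k => ‖W k‖ ^ 2)
        (fun i _ => by positivity) (by
          rw [Finset.sum_const, Finset.card_univ, Fintype.card_fin, nsmul_eq_mul]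
          field_simp) (fun i _ => by positivity)
      have hprod : ∏ k, (‖W k‖ ^ 2) ^ ((1 : ℝ) / K) = (P ^ ((1 : ℝ) / K)) ^ 2 := by
        have hterm : ∀ k : Fin K, (‖W k‖ ^ 2) ^ ((1 : ℝ) / K)
            = (‖W k‖ ^ ((1 : ℝ) / K)) ^ 2 := by
          intro k
          rw [← Real.rpow_natCast (‖W k‖) 2, ← Real.rpow_mul (norm_nonneg _),
            mul_comm, Real.rpow_mul (norm_nonneg _), Real.rpow_natCast]
        calc ∏ k, (‖W k‖ ^ 2) ^ ((1 : ℝ) / K)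
            = ∏ k, (‖W k‖ ^ ((1 : ℝ) / K)) ^ 2 :=
              Finset.prod_congr rfl (fun k _ => hterm k)
          _ = (∏ k, ‖W k‖ ^ ((1 : ℝ) / K)) ^ 2 := by rw [Finset.prod_pow]
          _ = (P ^ ((1 : ℝ) / K)) ^ 2 := by
              rw [Real.finset_prod_rpow Finset.univ _ (fun i _ => norm_nonneg _)]
      rw [hprod] at hgm
      have hsumW : (P ^ ((1 : ℝ) / K)) ^ 2 ≤ (1 / (K : ℝ)) * ∑ k, ‖W k‖ ^ 2 := by
        calc (P ^ ((1 : ℝ) / K)) ^ 2 ≤ ∑ k, (1 / (K : ℝ)) * ‖W k‖ ^ 2 := hgm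
          _ = (1 / (K : ℝ)) * ∑ k, ‖W k‖ ^ 2 := by rw [Finset.mul_sum]
      -- compare scales
      have hcle : (η ^ ((1 : ℝ) / K))⁻¹ ≤ P ^ ((1 : ℝ) / K) := by
        rw [← Real.inv_rpow hηpos.le]
        exact Real.rpow_le_rpow (inv_nonneg.2 hηpos.le) hPge (by positivity)
      have hc2 : ((η ^ ((1 : ℝ) / K))⁻¹) ^ 2 ≤ (P ^ ((1 : ℝ) / K)) ^ 2 :=
        pow_le_pow_left₀ hcpos.le hcle 2
      rw [hsum_unit Wstar _ hcpos hWs]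
      have hfin : (K : ℝ) * ((η ^ ((1 : ℝ) / K))⁻¹) ^ 2 ≤ ∑ k, ‖W k‖ ^ 2 := by
        calc (K : ℝ) * ((η ^ ((1 : ℝ) / K))⁻¹) ^ 2
            ≤ (K : ℝ) * (P ^ ((1 : ℝ) / K)) ^ 2 := by nlinarith
          _ ≤ (K : ℝ) * ((1 / (K : ℝ)) * ∑ k, ‖W k‖ ^ 2) := by nlinarith
          _ = ∑ k, ‖W k‖ ^ 2 := by field_simp
      linarith
    · rintro ⟨hfeas, hmin⟩ W hWn
      by_contra hlt
      push_neg at hlt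
      set μ := ⨅ n, y n * f W (x n) with hμdef
      have hμpos : 0 < μ := hηpos.trans hlt
      have hμle : ∀ n, μ ≤ y n * f W (x n) := fun n => ciInf_le (hbdd W) n
      have hfW := hpos_to_feas W μ hμpos hμle
      have hmn := hmin _ hfW
      have hcμpos : 0 < (μ ^ ((1 : ℝ) / K))⁻¹ := inv_pos.2 (Real.rpow_pos_of_pos hμpos _)
      rw [hsum_unit Wstar _ hcpos hWs, hsum_unit W _ hcμpos hWn] at hmn
      have hsq : ((η ^ ((1 : ℝ) / K))⁻¹) ^ 2 ≤ ((μ ^ ((1 : ℝ) / K))⁻¹) ^ 2 := by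
        nlinarith
      have hle1 : (η ^ ((1 : ℝ) / K))⁻¹ ≤ (μ ^ ((1 : ℝ) / K))⁻¹ :=
        le_of_pow_le_pow_left₀ (by norm_num) hcμpos.le hsq
      have hle2 : μ ^ ((1 : ℝ) / K) ≤ η ^ ((1 : ℝ) / K) := by
        have hηr : 0 < η ^ ((1 : ℝ) / K) := Real.rpow_pos_of_pos hηpos _
        have hμr : 0 < μ ^ ((1 : ℝ) / K) := Real.rpow_pos_of_pos hμpos _
        nlinarith [mul_inv_cancel₀ hηr.ne', mul_inv_cancel₀ hμr.ne']
      have hle3 : μ ≤ η := by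
        have := pow_le_pow_left₀ (Real.rpow_pos_of_pos hμpos _).le hle2 K
        rwa [hrpow_inv μ hμpos, hrpow_inv η hηpos] at this
      linarith
end

section
/- Let f(W₁,...,W_K; x) be differentiable and positively one-homogeneous in each layer's weights. Under the gradient flow W_k'(t) = −∂L/∂W_k with L(W) = Σ_n exp(−y_n f(W; x_n)), the quantity d/dt ‖W_k(t)‖²_F = 2 Σ_n y_n f(W(t); x_n) exp(−y_n f(W(t); x_n)) is the same for all layers k = 1,...,K. Consequently ‖W_k(t)‖²_F − ‖W_j(t)‖²_F is constant in time for all k, j. -/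
open Finset

lemma euler_identity {E : Type*} [NormedAddCommGroup E] [InnerProductSpace ℝ E]
    (g : E → ℝ) (w : E) (hd : DifferentiableAt ℝ g w)
    (hhom : ∀ α : ℝ, 0 < α → g (α • w) = α * g w) :
    fderiv ℝ g w w = g w := by
  have hsm : HasDerivAt (fun α : ℝ => α • w) w 1 := by
    simpa using (hasDerivAt_id (1 : ℝ)).smul_const w
  have h1 : HasDerivAt (fun α : ℝ => g (α • w)) (fderiv ℝ g w w) 1 := by
    have hd' : HasFDerivAt g (fderiv ℝ g w) ((1:ℝ) • w) := by simpa using hd.hasFDerivAt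
    have := hd'.comp_hasDerivAt 1 hsm
    exact this
  have h2 : HasDerivAt (fun α : ℝ => g (α • w)) (g w) 1 := by
    have heq : (fun α : ℝ => g (α • w)) =ᶠ[nhds 1] fun α => α * g w := by
      filter_upwards [Ioi_mem_nhds (by norm_num : (0:ℝ) < 1)] with α hα
      exact hhom α hα
    exact (HasDerivAt.congr_of_eventuallyEq
      (by simpa using (hasDerivAt_id (1:ℝ)).mul_const (g w)) heq)
  exact h1.unique h2

/-- Under the gradient flow of the exponential loss, the squared Frobenius norm
of each layer grows at the same rate `2 ∑ₙ yₙ f e^{−yₙ f}`, so differences of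
squared layer norms are conserved. -/
theorem layer_norms_grow_at_same_rate {d K N : ℕ} {X : Type*}
    (f : (Fin K → EuclideanSpace ℝ (Fin d)) → X → ℝ)
    (hhom : ∀ (W : Fin K → EuclideanSpace ℝ (Fin d)) (k : Fin K) (α : ℝ),
      0 < α → ∀ x, f (Function.update W k (α • W k)) x = α * f W x)
    (hdiff : ∀ (W : Fin K → EuclideanSpace ℝ (Fin d)) (k : Fin K) (x : X),
      DifferentiableAt ℝ (fun u => f (Function.update W k u) x) (W k))
    (x : Fin N → X) (y : Fin N → ℝ) (hy : ∀ n, y n = 1 ∨ y n = -1)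
    (L : (Fin K → EuclideanSpace ℝ (Fin d)) → ℝ)
    (hL : L = fun W => ∑ n, Real.exp (-(y n * f W (x n))))
    (W : ℝ → Fin K → EuclideanSpace ℝ (Fin d))
    (hflow : ∀ (k : Fin K) (t : ℝ),
      HasDerivAt (fun s => W s k)
        (-(gradient (fun u => L (Function.update (W t) k u)) (W t k))) t) :
    (∀ (k : Fin K) (t : ℝ),
      HasDerivAt (fun s => ‖W s k‖ ^ 2)
        (2 * ∑ n, y n * f (W t) (x n) * Real.exp (-(y n * f (W t) (x n)))) t) ∧
    (∀ (k j : Fin K) (t : ℝ),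
      ‖W t k‖ ^ 2 - ‖W t j‖ ^ 2 = ‖W 0 k‖ ^ 2 - ‖W 0 j‖ ^ 2) := by
  have key : ∀ (k : Fin K) (t : ℝ),
      HasDerivAt (fun s => ‖W s k‖ ^ 2)
        (2 * ∑ n, y n * f (W t) (x n) * Real.exp (-(y n * f (W t) (x n)))) t := by
    intro k t
    set w := W t k with hw
    set g : Fin N → EuclideanSpace ℝ (Fin d) → ℝ :=
      fun n u => f (Function.update (W t) k u) (x n) with hg
    have hgw : ∀ n, g n w = f (W t) (x n) := by
      intro n; simp [hg, hw, Function.update_eq_self]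
    -- Frechet derivative of the loss restricted to layer k
    have hterm : ∀ n : Fin N, HasFDerivAt (fun u => Real.exp (-(y n * g n u)))
        (Real.exp (-(y n * g n w)) • (-(y n • fderiv ℝ (g n) w))) w := by
      intro n
      exact (((hdiff (W t) k (x n)).hasFDerivAt.const_mul (y n)).neg).exp
    have hFsum : HasFDerivAt (fun u => L (Function.update (W t) k u))
        (∑ n, Real.exp (-(y n * g n w)) • (-(y n • fderiv ℝ (g n) w))) w := by
      rw [hL]
      exact HasFDerivAt.fun_sum (fun n _ => hterm n)
    set F' := ∑ n, Real.exp (-(y n * g n w)) • (-(y n • fderiv ℝ (g n) w)) with hF'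
    have hgradat : HasGradientAt (fun u => L (Function.update (W t) k u))
        ((InnerProductSpace.toDual ℝ _).symm F') w := hFsum.hasGradientAt
    have hgradeq : gradient (fun u => L (Function.update (W t) k u)) w
        = (InnerProductSpace.toDual ℝ _).symm F' := hgradat.gradient
    -- Euler identity for each g n
    have heuler : ∀ n, fderiv ℝ (g n) w w = f (W t) (x n) := by
      intro n
      rw [← hgw n]
      refine euler_identity (g n) w (hdiff (W t) k (x n)) ?_
      intro α hα
      rw [hgw n]
      exact hhom (W t) k α hα (x n)
    -- pairing
    have hpair0 : inner ℝ (gradient (fun u => L (Function.update (W t) k u)) w) w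
        = -∑ n, y n * f (W t) (x n) * Real.exp (-(y n * f (W t) (x n))) := by
      rw [hgradeq, InnerProductSpace.toDual_symm_apply]
      simp only [hF', ContinuousLinearMap.sum_apply, ContinuousLinearMap.smul_apply,
        ContinuousLinearMap.neg_apply, heuler, hgw, smul_eq_mul, ← Finset.sum_neg_distrib]
      congr 1; ext n; ring
    have hpair : (inner ℝ w (gradient (fun u => L (Function.update (W t) k u)) w) : ℝ)
        = -∑ n, y n * f (W t) (x n) * Real.exp (-(y n * f (W t) (x n))) := by
      rw [real_inner_comm]; exact hpair0
    have hinner : HasDerivAt (fun s => (inner ℝ (W s k) (W s k) : ℝ))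
        ((inner ℝ w (-(gradient (fun u => L (Function.update (W t) k u)) w)) : ℝ)
          + inner ℝ (-(gradient (fun u => L (Function.update (W t) k u)) w)) w) t :=
      (hflow k t).inner ℝ (hflow k t)
    have : HasDerivAt (fun s => ‖W s k‖ ^ 2)
        ((inner ℝ w (-(gradient (fun u => L (Function.update (W t) k u)) w)) : ℝ)
          + inner ℝ (-(gradient (fun u => L (Function.update (W t) k u)) w)) w) t := by
      simpa only [real_inner_self_eq_norm_sq] using hinner
    convert this using 1
    rw [inner_neg_right, inner_neg_left, real_inner_comm w, hpair]
    ring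
  refine ⟨key, fun k j t => ?_⟩
  have hφ : ∀ s : ℝ, HasDerivAt (fun u => ‖W u k‖ ^ 2 - ‖W u j‖ ^ 2) 0 s := by
    intro s
    simpa [Pi.sub_def] using (key k s).sub (key j s)
  exact is_const_of_deriv_eq_zero (fun s => (hφ s).differentiableAt)
    (fun s => (hφ s).deriv) t 0
end
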